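/- Let ω₀ be a real-valued function defined and continuous on the complement of a finite set S in ℝ², and suppose ω₀ is asymptotically flat in the sense that there exist β ∈ ℝ and constants C, R₀ > 0 such that |ω₀(x,ρ) − β/r| ≤ C/r² whenever r = √(x²+ρ²) ≥ R₀. Fix L > 0 and define a₀ = 0 and aₙ = −β/(L|n|) for n ≠ 0. Then for every point (x,ρ) ∈ ℝ² such that (x+nL, ρ) ∉ S for all n ∈ ℤ, the series ∑_{n∈ℤ} ( ω₀(x+nL, ρ) + aₙ ) converges absolutely, and the resulting function ω satisfies the periodicity ω(x+L, ρ) = ω(x, ρ) at all such points. -/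

import Mathlib

set_option maxHeartbeats 1000000

/-- Auxiliary summability lemma: the absolute series converges at every `x`
(no continuity or exceptional-set hypothesis needed). -/
lemma statement0_aux (ω₀ : ℝ × ℝ → ℝ) (β C R₀ L : ℝ) (hC : 0 < C) (hR₀ : 0 < R₀) (hL : 0 < L)
    (hflat : ∀ x ρ : ℝ, R₀ ≤ Real.sqrt (x^2 + ρ^2) →
      |ω₀ (x, ρ) - β / Real.sqrt (x^2 + ρ^2)| ≤ C / (x^2 + ρ^2))
    (a : ℤ → ℝ) (ha : ∀ n : ℤ, a n = if n = 0 then 0 else -β / (L * |(n : ℝ)|))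
    (x ρ : ℝ) :
    Summable (fun n : ℤ => |ω₀ (x + n * L, ρ) + a n|) := by
  set A : ℝ := |x| + |ρ| with hA
  have hA0 : 0 ≤ A := by positivity
  set K : ℝ := (4 * C + 2 * |β| * A) / L ^ 2 with hK
  set B : ℝ := 2 * (|x| + |ρ| + R₀) with hB
  have hB0 : 0 < B := by positivity
  -- key pointwise estimate
  have key : ∀ n : ℤ, B ≤ L * |(n : ℝ)| →
      |ω₀ (x + n * L, ρ) + a n| ≤ K / (n : ℝ) ^ 2 := by
    intro n hn
    have hn0 : (n : ℝ) ≠ 0 := by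
      intro h
      rw [h, abs_zero, mul_zero] at hn
      linarith
    have hnz : n ≠ 0 := by exact_mod_cast fun h => hn0 (by exact_mod_cast congrArg (Int.cast : ℤ → ℝ) h)
    have habsn : (0:ℝ) < |(n : ℝ)| := abs_pos.mpr hn0
    set s : ℝ := x + (n : ℝ) * L with hs
    set r : ℝ := Real.sqrt (s ^ 2 + ρ ^ 2) with hr
    have hr2 : r ^ 2 = s ^ 2 + ρ ^ 2 := Real.sq_sqrt (by positivity)
    have hsabs : |(n:ℝ)| * L - |x| ≤ |s| := by
      have h1 : |(n:ℝ) * L| ≤ |s| + |x| := by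
        calc |(n:ℝ) * L| = |s - x| := by rw [hs]; ring_nf
        _ ≤ |s| + |x| := abs_sub _ _
      rw [abs_mul, abs_of_pos hL] at h1
      linarith
    have hsub : |s| ≤ |x| + |(n:ℝ)| * L := by
      calc |s| ≤ |x| + |(n:ℝ) * L| := abs_add_le _ _
      _ = |x| + |(n:ℝ)| * L := by rw [abs_mul, abs_of_pos hL]
    have hhalf : L * |(n:ℝ)| / 2 ≤ |s| := by
      have : |x| ≤ L * |(n:ℝ)| / 2 := by
        have : |x| ≤ B / 2 := by rw [hB]; linarith [abs_nonneg ρ, hR₀]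
        linarith
      linarith [hsabs]
    have hrs : |s| ≤ r := by
      rw [hr, ← Real.sqrt_sq_eq_abs]
      exact Real.sqrt_le_sqrt (by nlinarith [sq_nonneg ρ])
    have hrups : r ≤ |s| + |ρ| := by
      rw [hr]
      have : s ^ 2 + ρ ^ 2 ≤ (|s| + |ρ|) ^ 2 := by
        have := abs_nonneg s; have := abs_nonneg ρ
        nlinarith [sq_abs s, sq_abs ρ]
      calc Real.sqrt (s ^ 2 + ρ ^ 2) ≤ Real.sqrt ((|s| + |ρ|) ^ 2) := Real.sqrt_le_sqrt this
      _ = |s| + |ρ| := Real.sqrt_sq (by positivity)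
    have hrR : R₀ ≤ r := by
      have : R₀ ≤ L * |(n:ℝ)| / 2 := by
        have : R₀ ≤ B / 2 := by rw [hB]; linarith [abs_nonneg x, abs_nonneg ρ]
        linarith
      linarith [hhalf, hrs]
    have hrpos : 0 < r := lt_of_lt_of_le hR₀ hrR
    have hrlow : L * |(n:ℝ)| / 2 ≤ r := le_trans hhalf hrs
    have hLn : (0:ℝ) < L * |(n:ℝ)| := by positivity
    -- flatness at s
    have hflat' : |ω₀ (s, ρ) - β / r| ≤ C / (s ^ 2 + ρ ^ 2) := hflat s ρ hrR
    -- first bound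
    have hb1 : C / (s ^ 2 + ρ ^ 2) ≤ 4 * C / (L ^ 2 * (n:ℝ) ^ 2) := by
      have hd : L ^ 2 * (n:ℝ) ^ 2 / 4 ≤ s ^ 2 + ρ ^ 2 := by
        rw [← hr2]
        have : (L * |(n:ℝ)| / 2) ^ 2 ≤ r ^ 2 := by
          have := hrlow; nlinarith
        have hsq : (L * |(n:ℝ)| / 2) ^ 2 = L ^ 2 * (n:ℝ) ^ 2 / 4 := by
          rw [← sq_abs (n:ℝ)]; ring
        linarith [hsq ▸ this]
      have h4 : (0:ℝ) < L ^ 2 * (n:ℝ) ^ 2 / 4 := by positivity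
      calc C / (s ^ 2 + ρ ^ 2) ≤ C / (L ^ 2 * (n:ℝ) ^ 2 / 4) :=
            div_le_div_of_nonneg_left hC.le h4 hd
      _ = 4 * C / (L ^ 2 * (n:ℝ) ^ 2) := by
            rw [div_div_eq_mul_div]; ring
    -- second bound
    have hax : a n = -β / (L * |(n:ℝ)|) := by rw [ha n, if_neg hnz]
    have hb2 : |β / r - β / (L * |(n:ℝ)|)| ≤ 2 * |β| * A / (L ^ 2 * (n:ℝ) ^ 2) := by
      rw [div_sub_div _ _ (ne_of_gt hrpos) (ne_of_gt hLn), abs_div]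
      have hnum : |β * (L * |(n:ℝ)|) - r * β| ≤ |β| * A := by
        rw [show β * (L * |(n:ℝ)|) - r * β = β * (L * |(n:ℝ)| - r) by ring, abs_mul]
        have h1 : |L * |(n:ℝ)| - r| ≤ A := by
          rw [abs_le]
          constructor
          · -- -A ≤ L|n| - r, i.e. r ≤ L|n| + A
            have : r ≤ L * |(n:ℝ)| + A := by
              have := hrups; have := hsub
              rw [hA]; nlinarith
            linarith
          · -- L|n| - r ≤ A
            have : L * |(n:ℝ)| - A ≤ r := by
              have := hsabs; have := hrs
              rw [hA]; nlinarith [abs_nonneg ρ]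
            linarith
        exact mul_le_mul_of_nonneg_left h1 (abs_nonneg β)
      have hden : L ^ 2 * (n:ℝ) ^ 2 / 2 ≤ |r * (L * |(n:ℝ)|)| := by
        rw [abs_of_pos (mul_pos hrpos hLn)]
        have : (L * |(n:ℝ)| / 2) * (L * |(n:ℝ)|) ≤ r * (L * |(n:ℝ)|) :=
          mul_le_mul_of_nonneg_right hrlow hLn.le
        have heq : (L * |(n:ℝ)| / 2) * (L * |(n:ℝ)|) = L ^ 2 * (n:ℝ) ^ 2 / 2 := by
          rw [← sq_abs (n:ℝ)]; ring
        linarith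
      have hden0 : (0:ℝ) < L ^ 2 * (n:ℝ) ^ 2 / 2 := by positivity
      calc |β * (L * |(n:ℝ)|) - r * β| / |r * (L * |(n:ℝ)|)|
          ≤ (|β| * A) / (L ^ 2 * (n:ℝ) ^ 2 / 2) :=
            div_le_div₀ (by positivity) hnum hden0 hden
      _ = 2 * |β| * A / (L ^ 2 * (n:ℝ) ^ 2) := by
            rw [div_div_eq_mul_div]; ring
    -- combine
    have : |ω₀ (s, ρ) + a n| ≤ 4 * C / (L ^ 2 * (n:ℝ) ^ 2) + 2 * |β| * A / (L ^ 2 * (n:ℝ) ^ 2) := by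
      have := abs_add_le (ω₀ (s, ρ) - β / r) (β / r - β / (L * |(n:ℝ)|))
      have heq : ω₀ (s, ρ) + a n = (ω₀ (s, ρ) - β / r) + (β / r - β / (L * |(n:ℝ)|)) := by
        rw [hax]; ring
      rw [heq]
      calc |(ω₀ (s, ρ) - β / r) + (β / r - β / (L * |(n:ℝ)|))|
          ≤ |ω₀ (s, ρ) - β / r| + |β / r - β / (L * |(n:ℝ)|)| := abs_add_le _ _
      _ ≤ 4 * C / (L ^ 2 * (n:ℝ) ^ 2) + 2 * |β| * A / (L ^ 2 * (n:ℝ) ^ 2) :=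
            add_le_add (le_trans hflat' hb1) hb2
    have heqK : 4 * C / (L ^ 2 * (n:ℝ) ^ 2) + 2 * |β| * A / (L ^ 2 * (n:ℝ) ^ 2)
        = K / (n:ℝ) ^ 2 := by
      rw [hK]
      field_simp
    rw [← heqK]
    exact this
  -- summable majorant
  have hmaj : Summable (fun n : ℤ => K / (n : ℝ) ^ 2) := by
    have := (Real.summable_one_div_int_pow (p := 2)).mpr one_lt_two
    have h2 := this.mul_left K
    refine h2.congr fun n => ?_
    rw [mul_one_div]
  -- eventual bound
  have hev : ∀ᶠ n : ℤ in Filter.cofinite,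
      ‖|ω₀ (x + n * L, ρ) + a n|‖ ≤ K / (n : ℝ) ^ 2 := by
    have hfin : {n : ℤ | ¬ ‖|ω₀ (x + n * L, ρ) + a n|‖ ≤ K / (n : ℝ) ^ 2}.Finite := by
      apply Set.Finite.subset (Set.finite_Icc (-(⌈B / L⌉ + 1)) (⌈B / L⌉ + 1))
      intro n hn
      simp only [Set.mem_setOf_eq, not_le] at hn
      by_contra hmem
      apply absurd hn
      push_neg
      rw [Real.norm_eq_abs, abs_abs]
      apply key
      -- from ¬ mem Icc: |n| > ⌈B/L⌉+1
      have h1 : ¬ (|n| ≤ ⌈B / L⌉ + 1) := by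
        intro h
        exact hmem (by simpa [Set.mem_Icc] using abs_le.mp h)
      push_neg at h1
      have h2 : (⌈B / L⌉ : ℝ) + 1 ≤ (|n| : ℤ) := by exact_mod_cast h1.le
      have h3 : B / L ≤ (|n| : ℤ) := le_trans (by linarith [Int.le_ceil (B / L)]) h2
      have h4 : ((|n| : ℤ) : ℝ) = |(n : ℝ)| := by push_cast; ring
      rw [h4] at h3
      calc B = L * (B / L) := by field_simp
      _ ≤ L * |(n : ℝ)| := by
            exact mul_le_mul_of_nonneg_left h3 hL.le
    exact Filter.eventually_cofinite.mpr hfin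
  exact Summable.of_norm_bounded_eventually hmaj hev

theorem statement0 (S : Finset (ℝ × ℝ)) (ω₀ : ℝ × ℝ → ℝ)
    (hcont : ContinuousOn ω₀ ((S : Set (ℝ × ℝ)))ᶜ)
    (β C R₀ L : ℝ) (hC : 0 < C) (hR₀ : 0 < R₀) (hL : 0 < L)
    (hflat : ∀ x ρ : ℝ, R₀ ≤ Real.sqrt (x^2 + ρ^2) →
      |ω₀ (x, ρ) - β / Real.sqrt (x^2 + ρ^2)| ≤ C / (x^2 + ρ^2))
    (a : ℤ → ℝ) (ha : ∀ n : ℤ, a n = if n = 0 then 0 else -β / (L * |(n : ℝ)|))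
    (x ρ : ℝ) (hS : ∀ n : ℤ, ((x + n * L, ρ) : ℝ × ℝ) ∉ (S : Set (ℝ × ℝ))) :
    Summable (fun n : ℤ => |ω₀ (x + n * L, ρ) + a n|) ∧
    (∑' n : ℤ, (ω₀ (x + L + n * L, ρ) + a n)) = ∑' n : ℤ, (ω₀ (x + n * L, ρ) + a n) := by
  have habs := statement0_aux ω₀ β C R₀ L hC hR₀ hL hflat a ha x ρ
  refine ⟨habs, ?_⟩
  have hf : Summable (fun n : ℤ => ω₀ (x + n * L, ρ) + a n) := summable_abs_iff.mp habs
  -- the shifted series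
  have habs' := statement0_aux ω₀ β C R₀ L hC hR₀ hL hflat a ha (x + L) ρ
  have hg : Summable (fun n : ℤ => ω₀ (x + L + n * L, ρ) + a n) := by
    have := summable_abs_iff.mp habs'
    refine this.congr fun n => ?_
    norm_num
  set f : ℤ → ℝ := fun n => ω₀ (x + n * L, ρ) + a n with hfdef
  have e : ℤ ≃ ℤ := Equiv.addRight 1
  -- f shifted
  have hfs : Summable (fun n : ℤ => f (n + 1)) :=
    ((Equiv.addRight (1:ℤ)).summable_iff).mpr hf
  have htse : (∑' n : ℤ, f (n + 1)) = ∑' n : ℤ, f n := (Equiv.addRight (1:ℤ)).tsum_eq f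
  -- b n
  set b : ℤ → ℝ := fun n => a n - a (n + 1) with hbdef
  have hgfb : ∀ n : ℤ, ω₀ (x + L + n * L, ρ) + a n = f (n + 1) + b n := by
    intro n
    have harg : x + L + (n:ℝ) * L = x + ((n : ℤ) + 1 : ℤ) * L := by push_cast; ring
    rw [hfdef, hbdef]
    simp only []
    rw [harg]
    ring
  have hbsum : Summable b := by
    have : Summable (fun n : ℤ => (ω₀ (x + L + n * L, ρ) + a n) - f (n + 1)) := hg.sub hfs
    refine this.congr fun n => ?_
    rw [hgfb n]; ring
  -- a is even
  have haeven : ∀ n : ℤ, a (-n) = a n := by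
    intro n
    rw [ha, ha]
    by_cases h : n = 0
    · simp [h]
    · rw [if_neg h, if_neg (neg_ne_zero.mpr h)]
      push_cast
      rw [abs_neg]
  -- involution σ n = -1 - n
  have hσ : Function.Involutive (fun n : ℤ => -1 - n) := fun n => by ring
  have hbtsum : ∑' n : ℤ, b n = 0 := by
    have h1 : ∑' n : ℤ, b (-1 - n) = ∑' n : ℤ, b n := (Function.Involutive.toPerm _ hσ).tsum_eq b
    have h2 : ∀ n : ℤ, b (-1 - n) = -b n := by
      intro n
      rw [hbdef]
      simp only []
      have e1 : (-1 - n : ℤ) = -(n + 1) := by ring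
      rw [e1, show (-(n + 1) + 1 : ℤ) = -n from by ring, haeven, haeven]
      ring
    rw [tsum_congr h2, tsum_neg] at h1
    linarith
  calc (∑' n : ℤ, (ω₀ (x + L + n * L, ρ) + a n))
      = ∑' n : ℤ, (f (n + 1) + b n) := tsum_congr hgfb
  _ = (∑' n : ℤ, f (n + 1)) + ∑' n : ℤ, b n := Summable.tsum_add hfs hbsum
  _ = ∑' n : ℤ, f n := by rw [htse, hbtsum, add_zero]
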